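/- With entwining data (P, C, ψ, e, ψ^C), M = P^{coC}_e, and maps ρ, σ satisfying conditions (i)–(iv), the product (x ⊗ b)(y ⊗ c) = x ρ(b₍₁₎ ⊗ y_α) σ(b₍₂₎^α₍₁₎ ⊗ c_A) ⊗ b₍₂₎^α₍₂₎^A on M ⊗ C is associative if and only if both the cocycle condition ρ(a₍₁₎ ⊗ σ(b₍₁₎ ⊗ c_A)_α) σ(a₍₂₎^α₍₁₎ ⊗ b₍₂₎^A_B) ⊗ a₍₂₎^α₍₂₎^B = σ(a₍₁₎ ⊗ b_A) σ(a₍₂₎^A₍₁₎ ⊗ c_B) ⊗ a₍₂₎^A₍₂₎^B and the twisted module condition ρ(a₍₁₎ ⊗ ρ(b₍₁₎ ⊗ x_α)_β) σ(a₍₂₎^β₍₁₎ ⊗ b₍₂₎^α_A) ⊗ a₍₂₎^β₍₂₎^A = σ(a₍₁₎ ⊗ b_A) ρ(a₍₂₎^A₍₁₎ ⊗ x_α) ⊗ a₍₂₎^A₍₂₎^α hold for all a, b, c ∈ C, x ∈ M. -/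

import Mathlib

open TensorProduct LinearMap

noncomputable section

namespace Entwine

variable (k : Type) [Field k] (P : Type) [Ring P] [Algebra k P]
  (C : Type) [AddCommGroup C] [Module k C] [Coalgebra k C]

/-- coproduct of `C` -/
abbrev Δ : C →ₗ[k] C ⊗[k] C := Coalgebra.comul
/-- counit of `C` -/
abbrev ε : C →ₗ[k] k := Coalgebra.counit
/-- multiplication of `P` -/
abbrev μ : P ⊗[k] P →ₗ[k] P := LinearMap.mul' k P

variable (ψ : C ⊗[k] P →ₗ[k] P ⊗[k] C)

/-- entwining axiom `ψ∘(id⊗μ) = (μ⊗id)∘ψ₂₃∘ψ₁₂` -/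
def AxMul : Prop :=
  ψ ∘ₗ map LinearMap.id (μ k P) =
    map (μ k P) LinearMap.id
      ∘ₗ (TensorProduct.assoc k P P C).symm.toLinearMap
      ∘ₗ map LinearMap.id ψ
      ∘ₗ (TensorProduct.assoc k P C P).toLinearMap
      ∘ₗ map ψ LinearMap.id
      ∘ₗ (TensorProduct.assoc k C P P).symm.toLinearMap

/-- entwining axiom `ψ(c ⊗ 1) = 1 ⊗ c` -/
def AxOne : Prop := ∀ c : C, ψ (c ⊗ₜ (1 : P)) = (1 : P) ⊗ₜ c

/-- entwining axiom `(id⊗Δ)∘ψ = ψ₁₂∘ψ₂₃∘(Δ⊗id)` -/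
def AxComul : Prop :=
  map LinearMap.id (Δ k C) ∘ₗ ψ =
    (TensorProduct.assoc k P C C).toLinearMap
      ∘ₗ map ψ LinearMap.id
      ∘ₗ (TensorProduct.assoc k C P C).symm.toLinearMap
      ∘ₗ map LinearMap.id ψ
      ∘ₗ (TensorProduct.assoc k C C P).toLinearMap
      ∘ₗ map (Δ k C) LinearMap.id

/-- entwining axiom `(id⊗ε)∘ψ = ε⊗id` -/
def AxCounit : Prop :=
  (TensorProduct.rid k P).toLinearMap ∘ₗ map LinearMap.id (ε k C) ∘ₗ ψ =
    (TensorProduct.lid k P).toLinearMap ∘ₗ map (ε k C) LinearMap.id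

/-- `ψ` is an entwining map for the algebra `P` and the coalgebra `C` -/
def IsEntwining : Prop :=
  AxMul k P C ψ ∧ AxOne k P C ψ ∧ AxComul k P C ψ ∧ AxCounit k P C ψ

variable (e : C)

/-- `e` is a group-like element -/
def IsGrouplike : Prop :=
  Δ k C e = e ⊗ₜ[k] e ∧ ε k C e = 1

variable (ψC : C ⊗[k] C →ₗ[k] C ⊗[k] C)

/-- `(id⊗Δ)∘ψ^C = ψ^C₁₂∘ψ^C₂₃∘(Δ⊗id)` -/
def AxPsiCComul : Prop :=
  map LinearMap.id (Δ k C) ∘ₗ ψC =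
    (TensorProduct.assoc k C C C).toLinearMap
      ∘ₗ map ψC LinearMap.id
      ∘ₗ (TensorProduct.assoc k C C C).symm.toLinearMap
      ∘ₗ map LinearMap.id ψC
      ∘ₗ (TensorProduct.assoc k C C C).toLinearMap
      ∘ₗ map (Δ k C) LinearMap.id

/-- `(id⊗ε)∘ψ^C = ε⊗id` -/
def AxPsiCCounit : Prop :=
  (TensorProduct.rid k C).toLinearMap ∘ₗ map LinearMap.id (ε k C) ∘ₗ ψC =
    (TensorProduct.lid k C).toLinearMap ∘ₗ map (ε k C) LinearMap.id

/-- `ψ^C(e ⊗ c) = Δc` -/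
def AxPsiCUnit : Prop := ∀ c : C, ψC (e ⊗ₜ[k] c) = Δ k C c

/-- `(P, C, ψ, e, ψ^C)` form entwining data -/
def IsEntwiningData : Prop :=
  IsEntwining k P C ψ ∧ IsGrouplike k C e ∧
    AxPsiCComul k C ψC ∧ AxPsiCCounit k C ψC ∧ AxPsiCUnit k C e ψC

/-- the right coaction `Δ_R u = ψ(e ⊗ u)` on `P` -/
def deltaR : P →ₗ[k] P ⊗[k] C := ψ ∘ₗ TensorProduct.mk k C P e

/-- the fixed point subspace `M = P^{coC}_e`, as a submodule of `P` -/
def Msub : Submodule k P where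
  carrier := {x : P | ψ (e ⊗ₜ x) = x ⊗ₜ e}
  add_mem' := by
    intro a b ha hb
    simp only [Set.mem_setOf_eq] at *
    rw [TensorProduct.tmul_add, map_add, ha, hb, TensorProduct.add_tmul]
  zero_mem' := by
    simp only [Set.mem_setOf_eq, TensorProduct.tmul_zero, map_zero,
      TensorProduct.zero_tmul]
  smul_mem' := by
    intro r x hx
    simp only [Set.mem_setOf_eq] at *
    rw [TensorProduct.tmul_smul, map_smul, hx, TensorProduct.smul_tmul']

/-- the subspace `M ⊗ C` of `P ⊗ C` -/
def MCsub : Submodule k (P ⊗[k] C) :=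
  LinearMap.range (map (Msub k P C ψ e).subtype (LinearMap.id : C →ₗ[k] C))

variable (ρ : C ⊗[k] P →ₗ[k] P) (σ : C ⊗[k] C →ₗ[k] P)

/-- the map `ρ̂ : c ⊗ x ↦ ρ(c₍₁₎ ⊗ x_α) ⊗ c₍₂₎^α` -/
def rhat : C ⊗[k] P →ₗ[k] P ⊗[k] C :=
  map ρ LinearMap.id
    ∘ₗ (TensorProduct.assoc k C P C).symm.toLinearMap
    ∘ₗ map LinearMap.id ψ
    ∘ₗ (TensorProduct.assoc k C C P).toLinearMap
    ∘ₗ map (Δ k C) LinearMap.id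

/-- the map `σ̂ : b ⊗ c ↦ σ(b₍₁₎ ⊗ c_A) ⊗ b₍₂₎^A` -/
def shat : C ⊗[k] C →ₗ[k] P ⊗[k] C :=
  map σ LinearMap.id
    ∘ₗ (TensorProduct.assoc k C C C).symm.toLinearMap
    ∘ₗ map LinearMap.id ψC
    ∘ₗ (TensorProduct.assoc k C C C).toLinearMap
    ∘ₗ map (Δ k C) LinearMap.id

/-- multiplication of the first two factors: `x ⊗ (y ⊗ c) ↦ xy ⊗ c` -/
def mulPC : P ⊗[k] (P ⊗[k] C) →ₗ[k] P ⊗[k] C :=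
  map (μ k P) LinearMap.id ∘ₗ (TensorProduct.assoc k P P C).symm.toLinearMap

/-- the crossed product `(x ⊗ b)(y ⊗ c) = xρ(b₍₁₎⊗y_α)σ(b₍₂₎^α₍₁₎⊗c_A) ⊗ b₍₂₎^α₍₂₎^A` -/
def prodX : (P ⊗[k] C) ⊗[k] (P ⊗[k] C) →ₗ[k] P ⊗[k] C :=
  mulPC k P C
    ∘ₗ map LinearMap.id (mulPC k P C)
    ∘ₗ map LinearMap.id
        (map LinearMap.id (shat k P C ψC σ)
          ∘ₗ (TensorProduct.assoc k P C C).toLinearMap)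
    ∘ₗ map LinearMap.id
        (map (rhat k P C ψ ρ) LinearMap.id
          ∘ₗ (TensorProduct.assoc k C P C).symm.toLinearMap)
    ∘ₗ (TensorProduct.assoc k P C (P ⊗[k] C)).toLinearMap

/-- condition (i): `ρ(e,x) = x` for `x ∈ M` and `ρ(c,1) = ε(c)1` -/
def CondI : Prop :=
  (∀ x : P, x ∈ Msub k P C ψ e → ρ (e ⊗ₜ x) = x) ∧
    ∀ c : C, ρ (c ⊗ₜ (1 : P)) = ε k C c • (1 : P)

/-- condition (ii): `ρ̂` maps `C ⊗ M` into `M ⊗ C` -/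
def CondII : Prop :=
  ∀ (c : C) (x : P), x ∈ Msub k P C ψ e →
    rhat k P C ψ ρ (c ⊗ₜ x) ∈ MCsub k P C ψ e

/-- the right hand side of condition (iii): `(μ⊗id)∘(id⊗ρ̂)∘(ρ̂⊗id)` -/
def BmapIII : C ⊗[k] (P ⊗[k] P) →ₗ[k] P ⊗[k] C :=
  mulPC k P C
    ∘ₗ map LinearMap.id (rhat k P C ψ ρ)
    ∘ₗ (TensorProduct.assoc k P C P).toLinearMap
    ∘ₗ map (rhat k P C ψ ρ) LinearMap.id
    ∘ₗ (TensorProduct.assoc k C P P).symm.toLinearMap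

/-- condition (iii): twisted multiplicativity of `ρ` -/
def CondIII : Prop :=
  ∀ (c : C) (x y : P), x ∈ Msub k P C ψ e → y ∈ Msub k P C ψ e →
    rhat k P C ψ ρ (c ⊗ₜ (x * y)) = BmapIII k P C ψ ρ (c ⊗ₜ (x ⊗ₜ y))

/-- `σ` takes values in `M` -/
def SigmaIntoM : Prop := ∀ b c : C, σ (b ⊗ₜ c) ∈ Msub k P C ψ e

/-- condition (iv): `σ(e⊗c) = ε(c)1` and `σ(c₍₁₎⊗e_A) ⊗ c₍₂₎^A = 1 ⊗ c` -/
def CondIV : Prop :=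
  (∀ c : C, σ (e ⊗ₜ c) = ε k C c • (1 : P)) ∧
    ∀ c : C, shat k P C ψC σ (c ⊗ₜ e) = (1 : P) ⊗ₜ c

/-- `(ρ, σ)` are crossed product data: conditions (i)–(iv). -/
def IsCrossedData : Prop :=
  CondI k P C ψ e ρ ∧ CondII k P C ψ e ρ ∧ CondIII k P C ψ e ρ ∧
    SigmaIntoM k P C ψ e σ ∧ CondIV k P C e ψC σ

/-- left hand side of the cocycle condition (2.6) -/
def CocLHS : C ⊗[k] (C ⊗[k] C) →ₗ[k] P ⊗[k] C :=
  mulPC k P C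
    ∘ₗ map LinearMap.id (shat k P C ψC σ)
    ∘ₗ (TensorProduct.assoc k P C C).toLinearMap
    ∘ₗ map (rhat k P C ψ ρ) LinearMap.id
    ∘ₗ (TensorProduct.assoc k C P C).symm.toLinearMap
    ∘ₗ map LinearMap.id (shat k P C ψC σ)

/-- right hand side of the cocycle condition (2.6) -/
def CocRHS : C ⊗[k] (C ⊗[k] C) →ₗ[k] P ⊗[k] C :=
  mulPC k P C
    ∘ₗ map LinearMap.id (shat k P C ψC σ)
    ∘ₗ (TensorProduct.assoc k P C C).toLinearMap
    ∘ₗ map (shat k P C ψC σ) LinearMap.id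
    ∘ₗ (TensorProduct.assoc k C C C).symm.toLinearMap

/-- the cocycle condition (2.6) -/
def Cocycle : Prop := CocLHS k P C ψ ψC ρ σ = CocRHS k P C ψC σ

/-- left hand side of the twisted module condition (2.7) -/
def TwLHS : C ⊗[k] (C ⊗[k] P) →ₗ[k] P ⊗[k] C :=
  mulPC k P C
    ∘ₗ map LinearMap.id (shat k P C ψC σ)
    ∘ₗ (TensorProduct.assoc k P C C).toLinearMap
    ∘ₗ map (rhat k P C ψ ρ) LinearMap.id
    ∘ₗ (TensorProduct.assoc k C P C).symm.toLinearMap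
    ∘ₗ map LinearMap.id (rhat k P C ψ ρ)

/-- right hand side of the twisted module condition (2.7) -/
def TwRHS : C ⊗[k] (C ⊗[k] P) →ₗ[k] P ⊗[k] C :=
  mulPC k P C
    ∘ₗ map LinearMap.id (rhat k P C ψ ρ)
    ∘ₗ (TensorProduct.assoc k P C P).toLinearMap
    ∘ₗ map (shat k P C ψC σ) LinearMap.id
    ∘ₗ (TensorProduct.assoc k C C P).symm.toLinearMap

/-- the twisted module condition (2.7), for `x ∈ M` -/
def Twisted : Prop :=
  ∀ (a b : C) (x : P), x ∈ Msub k P C ψ e →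
    TwLHS k P C ψ ψC ρ σ (a ⊗ₜ (b ⊗ₜ x)) = TwRHS k P C ψ ψC ρ σ (a ⊗ₜ (b ⊗ₜ x))

end Entwine

namespace Entwine
set_option linter.unusedSectionVars false

section Aux

variable (k : Type) [Field k] (P : Type) [Ring P] [Algebra k P]
  (C : Type) [AddCommGroup C] [Module k C] [Coalgebra k C]
  (ψ : C ⊗[k] P →ₗ[k] P ⊗[k] C) (e : C) (ψC : C ⊗[k] C →ₗ[k] C ⊗[k] C)
  (ρ : C ⊗[k] P →ₗ[k] P) (σ : C ⊗[k] C →ₗ[k] P)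

/-- left multiplication by `x` on the first factor of `P ⊗ C` -/
def lmulX (x : P) : P ⊗[k] C →ₗ[k] P ⊗[k] C :=
  map (LinearMap.mulLeft k x) LinearMap.id

/-- the map `a ⊗ (y ⊗ b) ↦ (1 ⊗ a)(y ⊗ b)` -/
def Phi : C ⊗[k] (P ⊗[k] C) →ₗ[k] P ⊗[k] C :=
  mulPC k P C
    ∘ₗ map LinearMap.id (shat k P C ψC σ)
    ∘ₗ (TensorProduct.assoc k P C C).toLinearMap
    ∘ₗ map (rhat k P C ψ ρ) LinearMap.id
    ∘ₗ (TensorProduct.assoc k C P C).symm.toLinearMap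

/-- `(p ⊗ d) ⊗ q ↦ p · ρ̂(d ⊗ q)` -/
def step1 : (P ⊗[k] C) ⊗[k] P →ₗ[k] P ⊗[k] C :=
  mulPC k P C
    ∘ₗ map LinearMap.id (rhat k P C ψ ρ)
    ∘ₗ (TensorProduct.assoc k P C P).toLinearMap

/-- `(p ⊗ d) ⊗ c ↦ p · σ̂(d ⊗ c)` -/
def step2 : (P ⊗[k] C) ⊗[k] C →ₗ[k] P ⊗[k] C :=
  mulPC k P C
    ∘ₗ map LinearMap.id (shat k P C ψC σ)
    ∘ₗ (TensorProduct.assoc k P C C).toLinearMap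

/-- `u ⊗ (p ⊗ d) ↦ step2 (step1 (u ⊗ p) ⊗ d)` -/
def Lam2 : (P ⊗[k] C) ⊗[k] (P ⊗[k] C) →ₗ[k] P ⊗[k] C :=
  step2 k P C ψC σ
    ∘ₗ map (step1 k P C ψ ρ) LinearMap.id
    ∘ₗ (TensorProduct.assoc k (P ⊗[k] C) P C).symm.toLinearMap

lemma mem_Msub {x : P} : x ∈ Msub k P C ψ e ↔ ψ (e ⊗ₜ x) = x ⊗ₜ e := Iff.rfl

lemma tmul_mem_MCsub {x : P} (hx : x ∈ Msub k P C ψ e) (c : C) :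
    x ⊗ₜ[k] c ∈ MCsub k P C ψ e :=
  ⟨(⟨x, hx⟩ : Msub k P C ψ e) ⊗ₜ c, by simp⟩

lemma MCsub_induction {motive : P ⊗[k] C → Prop} (h0 : motive 0)
    (hadd : ∀ s t, motive s → motive t → motive (s + t))
    (htmul : ∀ x ∈ Msub k P C ψ e, ∀ c : C, motive (x ⊗ₜ c))
    (t : P ⊗[k] C) (ht : t ∈ MCsub k P C ψ e) : motive t := by
  obtain ⟨s, rfl⟩ := ht
  induction s with
  | zero => simpa using h0
  | tmul x c => simpa using htmul x.1 x.2 c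
  | add s t hs ht => rw [map_add]; exact hadd _ _ hs ht

lemma one_mem_Msub (hOne : AxOne k P C ψ) : (1 : P) ∈ Msub k P C ψ e := hOne e

lemma mul_mem_Msub (hMul : AxMul k P C ψ) {x y : P}
    (hx : x ∈ Msub k P C ψ e) (hy : y ∈ Msub k P C ψ e) :
    x * y ∈ Msub k P C ψ e := by
  have h := LinearMap.congr_fun hMul (e ⊗ₜ[k] (x ⊗ₜ[k] y))
  rw [mem_Msub] at hx hy
  simpa [mem_Msub, LinearMap.comp_apply, mul'_apply, hx, hy] using h

lemma sigma_mem (hσ : SigmaIntoM k P C ψ e σ) (t : C ⊗[k] C) :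
    σ t ∈ Msub k P C ψ e := by
  induction t with
  | zero => simpa using (Msub k P C ψ e).zero_mem
  | tmul b c => exact hσ b c
  | add s t hs ht => rw [map_add]; exact (Msub k P C ψ e).add_mem hs ht

lemma shat_mem (hσ : SigmaIntoM k P C ψ e σ) (t : C ⊗[k] C) :
    shat k P C ψC σ t ∈ MCsub k P C ψ e := by
  have key : ∀ u : (C ⊗[k] C) ⊗[k] C,
      map σ (LinearMap.id : C →ₗ[k] C) u ∈ MCsub k P C ψ e := by
    intro u
    induction u with
    | zero => simpa using (MCsub k P C ψ e).zero_mem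
    | tmul s d =>
      simpa using tmul_mem_MCsub k P C ψ e (sigma_mem k P C ψ e σ hσ s) d
    | add s t hs ht => rw [map_add]; exact (MCsub k P C ψ e).add_mem hs ht
  rw [shat]
  simp only [LinearMap.comp_apply]
  exact key _

lemma lmulX_tmul (x p : P) (c : C) : lmulX k P C x (p ⊗ₜ c) = (x * p) ⊗ₜ c := by
  simp [lmulX]

lemma mulPC_tmul (x : P) (s : P ⊗[k] C) :
    mulPC k P C (x ⊗ₜ s) = lmulX k P C x s := by
  induction s with
  | zero => simp
  | tmul p c => simp [mulPC, lmulX, mul'_apply]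
  | add s t hs ht => rw [tmul_add, map_add, map_add, hs, ht]

lemma lmulX_mul (x y : P) (s : P ⊗[k] C) :
    lmulX k P C (x * y) s = lmulX k P C x (lmulX k P C y s) := by
  induction s with
  | zero => simp
  | tmul p c => simp [lmulX_tmul, mul_assoc]
  | add s t hs ht => simp only [map_add, hs, ht]

lemma lmulX_one (s : P ⊗[k] C) : lmulX k P C 1 s = s := by
  induction s with
  | zero => simp
  | tmul p c => simp [lmulX_tmul]
  | add s t hs ht => rw [map_add, hs, ht]

lemma lmulX_mem (hMul : AxMul k P C ψ) {x : P} (hx : x ∈ Msub k P C ψ e)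
    {s : P ⊗[k] C} (hs : s ∈ MCsub k P C ψ e) :
    lmulX k P C x s ∈ MCsub k P C ψ e := by
  refine MCsub_induction k P C ψ e
    (motive := fun s => lmulX k P C x s ∈ MCsub k P C ψ e) ?_ ?_ ?_ s hs
  · show lmulX k P C x 0 ∈ MCsub k P C ψ e
    rw [map_zero]; exact (MCsub k P C ψ e).zero_mem
  · intro s t hs' ht'
    show lmulX k P C x (s + t) ∈ MCsub k P C ψ e
    rw [map_add]; exact (MCsub k P C ψ e).add_mem hs' ht'
  · intro p hp c
    show lmulX k P C x (p ⊗ₜ c) ∈ MCsub k P C ψ e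
    rw [lmulX_tmul]
    exact tmul_mem_MCsub k P C ψ e (mul_mem_Msub k P C ψ e hMul hx hp) c

lemma step1_tmul (p : P) (d : C) (q : P) :
    step1 k P C ψ ρ ((p ⊗ₜ d) ⊗ₜ q) = lmulX k P C p (rhat k P C ψ ρ (d ⊗ₜ q)) := by
  simp [step1, mulPC_tmul]

lemma step2_tmul (p : P) (d : C) (c : C) :
    step2 k P C ψC σ ((p ⊗ₜ d) ⊗ₜ c) = lmulX k P C p (shat k P C ψC σ (d ⊗ₜ c)) := by
  simp [step2, mulPC_tmul]

lemma Phi_tmul (a : C) (p : P) (d : C) :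
    Phi k P C ψ ψC ρ σ (a ⊗ₜ (p ⊗ₜ d)) =
      step2 k P C ψC σ (rhat k P C ψ ρ (a ⊗ₜ p) ⊗ₜ d) := by
  simp [Phi, step2]

lemma step1_lmul (x : P) (s : P ⊗[k] C) (q : P) :
    step1 k P C ψ ρ (lmulX k P C x s ⊗ₜ q) =
      lmulX k P C x (step1 k P C ψ ρ (s ⊗ₜ q)) := by
  induction s with
  | zero => simp [map_zero, zero_tmul]
  | tmul p d => rw [lmulX_tmul, step1_tmul, step1_tmul, lmulX_mul]
  | add s t hs ht => rw [map_add, add_tmul, map_add, add_tmul, map_add, map_add, hs, ht]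

lemma step2_lmul (x : P) (s : P ⊗[k] C) (c : C) :
    step2 k P C ψC σ (lmulX k P C x s ⊗ₜ c) =
      lmulX k P C x (step2 k P C ψC σ (s ⊗ₜ c)) := by
  induction s with
  | zero => simp [map_zero, zero_tmul]
  | tmul p d => rw [lmulX_tmul, step2_tmul, step2_tmul, lmulX_mul]
  | add s t hs ht => rw [map_add, add_tmul, map_add, add_tmul, map_add, map_add, hs, ht]

lemma step2_mem (hMul : AxMul k P C ψ) (hσ : SigmaIntoM k P C ψ e σ)
    {s : P ⊗[k] C} (hs : s ∈ MCsub k P C ψ e) (c : C) :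
    step2 k P C ψC σ (s ⊗ₜ c) ∈ MCsub k P C ψ e := by
  refine MCsub_induction k P C ψ e
    (motive := fun s => step2 k P C ψC σ (s ⊗ₜ c) ∈ MCsub k P C ψ e) ?_ ?_ ?_ s hs
  · show step2 k P C ψC σ ((0 : P ⊗[k] C) ⊗ₜ c) ∈ MCsub k P C ψ e
    rw [zero_tmul, map_zero]; exact (MCsub k P C ψ e).zero_mem
  · intro s t hs' ht'
    show step2 k P C ψC σ ((s + t) ⊗ₜ c) ∈ MCsub k P C ψ e
    rw [add_tmul, map_add]; exact (MCsub k P C ψ e).add_mem hs' ht'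
  · intro p hp d
    show step2 k P C ψC σ ((p ⊗ₜ d) ⊗ₜ c) ∈ MCsub k P C ψ e
    rw [step2_tmul]
    exact lmulX_mem k P C ψ e hMul hp (shat_mem k P C ψ e ψC σ hσ _)

lemma Lam2_tmul (u : P ⊗[k] C) (p : P) (d : C) :
    Lam2 k P C ψ ψC ρ σ (u ⊗ₜ (p ⊗ₜ d)) =
      step2 k P C ψC σ (step1 k P C ψ ρ (u ⊗ₜ p) ⊗ₜ d) := by
  simp [Lam2]

lemma Lam2_pure (r : P) (a : C) (s : P ⊗[k] C) :
    Lam2 k P C ψ ψC ρ σ ((r ⊗ₜ a) ⊗ₜ s) =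
      lmulX k P C r (Phi k P C ψ ψC ρ σ (a ⊗ₜ s)) := by
  induction s with
  | zero => simp [tmul_zero]
  | tmul p d => rw [Lam2_tmul, step1_tmul, step2_lmul, Phi_tmul]
  | add s t hs ht => rw [tmul_add, map_add, tmul_add, map_add, map_add, hs, ht]

lemma prodX_tmul (x : P) (a : C) (v : P ⊗[k] C) :
    prodX k P C ψ ψC ρ σ ((x ⊗ₜ a) ⊗ₜ v) =
      lmulX k P C x (Phi k P C ψ ψC ρ σ (a ⊗ₜ v)) := by
  induction v with
  | zero => simp [tmul_zero]
  | tmul y b =>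
    simp only [prodX, Phi, LinearMap.comp_apply, LinearEquiv.coe_coe,
      TensorProduct.assoc_tmul, TensorProduct.assoc_symm_tmul, map_tmul,
      LinearMap.id_coe, id_eq]
    rw [mulPC_tmul]
  | add v w hv hw => rw [tmul_add, map_add, tmul_add, map_add, map_add, hv, hw]

lemma prodX_snd (s : P ⊗[k] C) (z : P) (c : C) :
    prodX k P C ψ ψC ρ σ (s ⊗ₜ (z ⊗ₜ c)) =
      step2 k P C ψC σ (step1 k P C ψ ρ (s ⊗ₜ z) ⊗ₜ c) := by
  induction s with
  | zero => simp [zero_tmul]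
  | tmul p d => rw [prodX_tmul, Phi_tmul, step1_tmul, step2_lmul]
  | add s t hs ht =>
    rw [add_tmul, map_add, add_tmul, map_add, add_tmul, map_add, hs, ht]

lemma prodX_lmul (x : P) (s : P ⊗[k] C) (w : P ⊗[k] C) :
    prodX k P C ψ ψC ρ σ (lmulX k P C x s ⊗ₜ w) =
      lmulX k P C x (prodX k P C ψ ψC ρ σ (s ⊗ₜ w)) := by
  induction s with
  | zero => simp [map_zero, zero_tmul]
  | tmul p d => rw [lmulX_tmul, prodX_tmul, prodX_tmul, lmulX_mul]
  | add s t hs ht => rw [map_add, add_tmul, map_add, add_tmul, map_add, map_add, hs, ht]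

lemma rhat_one (hOne : AxOne k P C ψ) (hI2 : ∀ c : C, ρ (c ⊗ₜ (1 : P)) = ε k C c • (1 : P))
    (c : C) : rhat k P C ψ ρ (c ⊗ₜ (1 : P)) = (1 : P) ⊗ₜ c := by
  have key : ∀ t : C ⊗[k] C,
      map ρ (LinearMap.id : C →ₗ[k] C)
        ((TensorProduct.assoc k C P C).symm
          (map (LinearMap.id : C →ₗ[k] C) ψ
            ((TensorProduct.assoc k C C P) (t ⊗ₜ (1 : P))))) =
      (1 : P) ⊗ₜ[k] (TensorProduct.lid k C (map (ε k C) (LinearMap.id : C →ₗ[k] C) t)) := by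
    intro t
    induction t with
    | zero => simp [zero_tmul]
    | tmul d d' =>
      simp only [TensorProduct.assoc_tmul, map_tmul, LinearMap.id_coe, id_eq,
        hOne d', TensorProduct.assoc_symm_tmul, hI2 d, TensorProduct.lid_tmul]
      rw [smul_tmul]
    | add s t hs ht =>
      simp only [add_tmul, map_add, tmul_add, hs, ht]
  have h2 : map (ε k C) (LinearMap.id : C →ₗ[k] C) (Δ k C c) = (1 : k) ⊗ₜ c :=
    Coalgebra.rTensor_counit_comul (R := k) (A := C) c
  have h3 := key (Δ k C c)
  rw [h2] at h3
  simp only [TensorProduct.lid_tmul, one_smul] at h3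
  rw [rhat]
  simp only [LinearMap.comp_apply, LinearEquiv.coe_coe, map_tmul,
    LinearMap.id_coe, id_eq]
  exact h3

lemma step1_one (hOne : AxOne k P C ψ)
    (hI2 : ∀ c : C, ρ (c ⊗ₜ (1 : P)) = ε k C c • (1 : P)) (s : P ⊗[k] C) :
    step1 k P C ψ ρ (s ⊗ₜ (1 : P)) = s := by
  induction s with
  | zero => simp [zero_tmul]
  | tmul p d =>
    rw [step1_tmul, rhat_one k P C ψ ρ hOne hI2, lmulX_tmul, mul_one]
  | add s t hs ht => rw [add_tmul, map_add, hs, ht]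

lemma step2_e (hIV2 : ∀ c : C, shat k P C ψC σ (c ⊗ₜ e) = (1 : P) ⊗ₜ c)
    (s : P ⊗[k] C) : step2 k P C ψC σ (s ⊗ₜ e) = s := by
  induction s with
  | zero => simp [zero_tmul]
  | tmul p d => rw [step2_tmul, hIV2 d, lmulX_tmul, mul_one]
  | add s t hs ht => rw [add_tmul, map_add, hs, ht]

lemma Phi_one (hOne : AxOne k P C ψ)
    (hI2 : ∀ c : C, ρ (c ⊗ₜ (1 : P)) = ε k C c • (1 : P)) (a b : C) :
    Phi k P C ψ ψC ρ σ (a ⊗ₜ ((1 : P) ⊗ₜ b)) = shat k P C ψC σ (a ⊗ₜ b) := by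
  rw [Phi_tmul, rhat_one k P C ψ ρ hOne hI2, step2_tmul, lmulX_one]

lemma Phi_e (hIV2 : ∀ c : C, shat k P C ψC σ (c ⊗ₜ e) = (1 : P) ⊗ₜ c)
    (b : C) (x : P) :
    Phi k P C ψ ψC ρ σ (b ⊗ₜ (x ⊗ₜ e)) = rhat k P C ψ ρ (b ⊗ₜ x) := by
  rw [Phi_tmul, step2_e k P C e ψC σ hIV2]

lemma CocLHS_apply (a b c : C) :
    CocLHS k P C ψ ψC ρ σ (a ⊗ₜ (b ⊗ₜ c)) =
      Phi k P C ψ ψC ρ σ (a ⊗ₜ shat k P C ψC σ (b ⊗ₜ c)) := by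
  simp [CocLHS, Phi]

lemma CocRHS_apply (a b c : C) :
    CocRHS k P C ψC σ (a ⊗ₜ (b ⊗ₜ c)) =
      step2 k P C ψC σ (shat k P C ψC σ (a ⊗ₜ b) ⊗ₜ c) := by
  simp [CocRHS, step2]

lemma TwLHS_apply (a b : C) (x : P) :
    TwLHS k P C ψ ψC ρ σ (a ⊗ₜ (b ⊗ₜ x)) =
      Phi k P C ψ ψC ρ σ (a ⊗ₜ rhat k P C ψ ρ (b ⊗ₜ x)) := by
  simp [TwLHS, Phi]

lemma TwRHS_apply (a b : C) (x : P) :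
    TwRHS k P C ψ ψC ρ σ (a ⊗ₜ (b ⊗ₜ x)) =
      step1 k P C ψ ρ (shat k P C ψC σ (a ⊗ₜ b) ⊗ₜ x) := by
  simp [TwRHS, step1]

lemma BmapIII_apply (c : C) (x y : P) :
    BmapIII k P C ψ ρ (c ⊗ₜ (x ⊗ₜ y)) =
      step1 k P C ψ ρ (rhat k P C ψ ρ (c ⊗ₜ x) ⊗ₜ y) := by
  simp [BmapIII, step1]

lemma condIII' (hIII : CondIII k P C ψ e ρ) {x y : P}
    (hx : x ∈ Msub k P C ψ e) (hy : y ∈ Msub k P C ψ e) (c : C) :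
    rhat k P C ψ ρ (c ⊗ₜ (x * y)) =
      step1 k P C ψ ρ (rhat k P C ψ ρ (c ⊗ₜ x) ⊗ₜ y) := by
  rw [hIII c x y hx hy, BmapIII_apply]

lemma step1_mulM (hIII : CondIII k P C ψ e ρ) {q p : P}
    (hq : q ∈ Msub k P C ψ e) (hp : p ∈ Msub k P C ψ e) (u : P ⊗[k] C) :
    step1 k P C ψ ρ (u ⊗ₜ (q * p)) =
      step1 k P C ψ ρ (step1 k P C ψ ρ (u ⊗ₜ q) ⊗ₜ p) := by
  induction u with
  | zero => simp [zero_tmul]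
  | tmul r d =>
    rw [step1_tmul, condIII' k P C ψ e ρ hIII hq hp, step1_tmul, step1_lmul]
  | add s t hs ht => simp only [add_tmul, map_add, hs, ht]

lemma Phi_lmul (hIII : CondIII k P C ψ e ρ) {q : P} (hq : q ∈ Msub k P C ψ e)
    {s : P ⊗[k] C} (hs : s ∈ MCsub k P C ψ e) (a : C) :
    Phi k P C ψ ψC ρ σ (a ⊗ₜ lmulX k P C q s) =
      Lam2 k P C ψ ψC ρ σ (rhat k P C ψ ρ (a ⊗ₜ q) ⊗ₜ s) := by
  refine MCsub_induction k P C ψ e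
    (motive := fun s => Phi k P C ψ ψC ρ σ (a ⊗ₜ lmulX k P C q s) =
      Lam2 k P C ψ ψC ρ σ (rhat k P C ψ ρ (a ⊗ₜ q) ⊗ₜ s)) ?_ ?_ ?_ s hs
  · show Phi k P C ψ ψC ρ σ (a ⊗ₜ lmulX k P C q 0) = _
    simp [tmul_zero]
  · intro s t hs' ht'
    show Phi k P C ψ ψC ρ σ (a ⊗ₜ lmulX k P C q (s + t)) = _
    simp only [map_add, tmul_add, hs', ht']
  · intro p hp d
    show Phi k P C ψ ψC ρ σ (a ⊗ₜ lmulX k P C q (p ⊗ₜ d)) = _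
    rw [lmulX_tmul, Phi_tmul, condIII' k P C ψ e ρ hIII hq hp, Lam2_tmul]

lemma Lam2_shat (hC : Cocycle k P C ψ ψC ρ σ) (u : P ⊗[k] C) (f c : C) :
    Lam2 k P C ψ ψC ρ σ (u ⊗ₜ shat k P C ψC σ (f ⊗ₜ c)) =
      step2 k P C ψC σ (step2 k P C ψC σ (u ⊗ₜ f) ⊗ₜ c) := by
  induction u with
  | zero => simp [zero_tmul]
  | tmul r a =>
    rw [Lam2_pure, ← CocLHS_apply, hC, CocRHS_apply, ← step2_lmul, ← step2_tmul]
  | add s t hs ht => simp only [add_tmul, map_add, hs, ht]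

lemma Lam2_lmul (hIII : CondIII k P C ψ e ρ) {q : P} (hq : q ∈ Msub k P C ψ e)
    {s : P ⊗[k] C} (hs : s ∈ MCsub k P C ψ e) (u : P ⊗[k] C) :
    Lam2 k P C ψ ψC ρ σ (u ⊗ₜ lmulX k P C q s) =
      Lam2 k P C ψ ψC ρ σ (step1 k P C ψ ρ (u ⊗ₜ q) ⊗ₜ s) := by
  refine MCsub_induction k P C ψ e
    (motive := fun s => Lam2 k P C ψ ψC ρ σ (u ⊗ₜ lmulX k P C q s) =
      Lam2 k P C ψ ψC ρ σ (step1 k P C ψ ρ (u ⊗ₜ q) ⊗ₜ s)) ?_ ?_ ?_ s hs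
  · show Lam2 k P C ψ ψC ρ σ (u ⊗ₜ lmulX k P C q 0) = _
    simp [tmul_zero]
  · intro s t hs' ht'
    show Lam2 k P C ψ ψC ρ σ (u ⊗ₜ lmulX k P C q (s + t)) = _
    simp only [map_add, tmul_add, hs', ht']
  · intro p hp d
    show Lam2 k P C ψ ψC ρ σ (u ⊗ₜ lmulX k P C q (p ⊗ₜ d)) = _
    rw [lmulX_tmul, Lam2_tmul, step1_mulM k P C ψ e ρ hIII hq hp, Lam2_tmul]

lemma Lam2_step2 (hMul : AxMul k P C ψ) (hσ : SigmaIntoM k P C ψ e σ)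
    (hIII : CondIII k P C ψ e ρ) (hC : Cocycle k P C ψ ψC ρ σ)
    {t : P ⊗[k] C} (ht : t ∈ MCsub k P C ψ e) (u : P ⊗[k] C) (c : C) :
    Lam2 k P C ψ ψC ρ σ (u ⊗ₜ step2 k P C ψC σ (t ⊗ₜ c)) =
      step2 k P C ψC σ (Lam2 k P C ψ ψC ρ σ (u ⊗ₜ t) ⊗ₜ c) := by
  refine MCsub_induction k P C ψ e
    (motive := fun t => Lam2 k P C ψ ψC ρ σ (u ⊗ₜ step2 k P C ψC σ (t ⊗ₜ c)) =
      step2 k P C ψC σ (Lam2 k P C ψ ψC ρ σ (u ⊗ₜ t) ⊗ₜ c)) ?_ ?_ ?_ t ht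
  · show Lam2 k P C ψ ψC ρ σ (u ⊗ₜ step2 k P C ψC σ ((0 : P ⊗[k] C) ⊗ₜ c)) = _
    simp [zero_tmul, tmul_zero]
  · intro s t hs' ht'
    show Lam2 k P C ψ ψC ρ σ (u ⊗ₜ step2 k P C ψC σ ((s + t) ⊗ₜ c)) = _
    simp only [add_tmul, map_add, tmul_add, hs', ht']
  · intro q hq f
    show Lam2 k P C ψ ψC ρ σ (u ⊗ₜ step2 k P C ψC σ ((q ⊗ₜ f) ⊗ₜ c)) = _
    rw [step2_tmul,
      Lam2_lmul k P C ψ e ψC ρ σ hIII hq (shat_mem k P C ψ e ψC σ hσ _),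
      Lam2_shat k P C ψ ψC ρ σ hC, ← Lam2_tmul]

lemma Lam2_rhat (hT : Twisted k P C ψ e ψC ρ σ) {z : P} (hz : z ∈ Msub k P C ψ e)
    (u : P ⊗[k] C) (b : C) :
    Lam2 k P C ψ ψC ρ σ (u ⊗ₜ rhat k P C ψ ρ (b ⊗ₜ z)) =
      step1 k P C ψ ρ (step2 k P C ψC σ (u ⊗ₜ b) ⊗ₜ z) := by
  induction u with
  | zero => simp [zero_tmul]
  | tmul r a =>
    rw [Lam2_pure, ← TwLHS_apply, hT a b z hz, TwRHS_apply, ← step1_lmul,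
      ← step2_tmul]
  | add s t hs ht => simp only [add_tmul, map_add, hs, ht]

lemma star_eq (hMul : AxMul k P C ψ) (hσ : SigmaIntoM k P C ψ e σ)
    (hII : CondII k P C ψ e ρ) (hIII : CondIII k P C ψ e ρ)
    (hC : Cocycle k P C ψ ψC ρ σ) (hT : Twisted k P C ψ e ψC ρ σ)
    {y z : P} (hy : y ∈ Msub k P C ψ e) (hz : z ∈ Msub k P C ψ e) (a b c : C) :
    prodX k P C ψ ψC ρ σ (Phi k P C ψ ψC ρ σ (a ⊗ₜ (y ⊗ₜ b)) ⊗ₜ (z ⊗ₜ c)) =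
      Phi k P C ψ ψC ρ σ (a ⊗ₜ lmulX k P C y (Phi k P C ψ ψC ρ σ (b ⊗ₜ (z ⊗ₜ c)))) := by
  have hrz : rhat k P C ψ ρ (b ⊗ₜ z) ∈ MCsub k P C ψ e := hII b z hz
  rw [prodX_snd, Phi_tmul k P C ψ ψC ρ σ a y b, Phi_tmul k P C ψ ψC ρ σ b z c,
    Phi_lmul k P C ψ e ψC ρ σ hIII hy
      (step2_mem k P C ψ e ψC σ hMul hσ hrz c),
    Lam2_step2 k P C ψ e ψC ρ σ hMul hσ hIII hC hrz,
    Lam2_rhat k P C ψ e ψC ρ σ hT hz]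

lemma E2 (hMul : AxMul k P C ψ) (hσ : SigmaIntoM k P C ψ e σ)
    (hII : CondII k P C ψ e ρ) (hIII : CondIII k P C ψ e ρ)
    (hC : Cocycle k P C ψ ψC ρ σ) (hT : Twisted k P C ψ e ψC ρ σ)
    (a : C) {v w : P ⊗[k] C} (hv : v ∈ MCsub k P C ψ e) (hw : w ∈ MCsub k P C ψ e) :
    prodX k P C ψ ψC ρ σ (Phi k P C ψ ψC ρ σ (a ⊗ₜ v) ⊗ₜ w) =
      Phi k P C ψ ψC ρ σ (a ⊗ₜ prodX k P C ψ ψC ρ σ (v ⊗ₜ w)) := by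
  refine MCsub_induction k P C ψ e
    (motive := fun v => prodX k P C ψ ψC ρ σ (Phi k P C ψ ψC ρ σ (a ⊗ₜ v) ⊗ₜ w) =
      Phi k P C ψ ψC ρ σ (a ⊗ₜ prodX k P C ψ ψC ρ σ (v ⊗ₜ w))) ?_ ?_ ?_ v hv
  · show prodX k P C ψ ψC ρ σ (Phi k P C ψ ψC ρ σ (a ⊗ₜ (0 : P ⊗[k] C)) ⊗ₜ w) = _
    simp [tmul_zero, zero_tmul]
  · intro s t hs' ht'
    show prodX k P C ψ ψC ρ σ (Phi k P C ψ ψC ρ σ (a ⊗ₜ (s + t)) ⊗ₜ w) = _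
    simp only [tmul_add, map_add, add_tmul, hs', ht']
  · intro y hy b
    show prodX k P C ψ ψC ρ σ (Phi k P C ψ ψC ρ σ (a ⊗ₜ (y ⊗ₜ b)) ⊗ₜ w) =
      Phi k P C ψ ψC ρ σ (a ⊗ₜ prodX k P C ψ ψC ρ σ ((y ⊗ₜ b) ⊗ₜ w))
    refine MCsub_induction k P C ψ e
      (motive := fun w => prodX k P C ψ ψC ρ σ (Phi k P C ψ ψC ρ σ (a ⊗ₜ (y ⊗ₜ b)) ⊗ₜ w) =
        Phi k P C ψ ψC ρ σ (a ⊗ₜ prodX k P C ψ ψC ρ σ ((y ⊗ₜ b) ⊗ₜ w))) ?_ ?_ ?_ w hw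
    · show prodX k P C ψ ψC ρ σ (Phi k P C ψ ψC ρ σ (a ⊗ₜ (y ⊗ₜ b)) ⊗ₜ (0 : P ⊗[k] C)) = _
      simp [tmul_zero, zero_tmul]
    · intro s t hs' ht'
      show prodX k P C ψ ψC ρ σ (Phi k P C ψ ψC ρ σ (a ⊗ₜ (y ⊗ₜ b)) ⊗ₜ (s + t)) = _
      simp only [tmul_add, map_add, hs', ht']
    · intro z hz c
      show prodX k P C ψ ψC ρ σ (Phi k P C ψ ψC ρ σ (a ⊗ₜ (y ⊗ₜ b)) ⊗ₜ (z ⊗ₜ c)) =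
        Phi k P C ψ ψC ρ σ (a ⊗ₜ prodX k P C ψ ψC ρ σ ((y ⊗ₜ b) ⊗ₜ (z ⊗ₜ c)))
      rw [prodX_tmul k P C ψ ψC ρ σ y b (z ⊗ₜ c)]
      exact star_eq k P C ψ e ψC ρ σ hMul hσ hII hIII hC hT hy hz a b c

end Aux


/-- The crossed product on `M ⊗ C` is associative if and only if the
cocycle condition (2.6) and the twisted module condition (2.7) hold. -/
theorem crossed_product_assoc_iff
    (k : Type) [Field k] (P : Type) [Ring P] [Algebra k P]
    (C : Type) [AddCommGroup C] [Module k C] [Coalgebra k C]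
    (ψ : C ⊗[k] P →ₗ[k] P ⊗[k] C) (e : C) (ψC : C ⊗[k] C →ₗ[k] C ⊗[k] C)
    (ρ : C ⊗[k] P →ₗ[k] P) (σ : C ⊗[k] C →ₗ[k] P)
    (hdata : IsEntwiningData k P C ψ e ψC)
    (hcross : IsCrossedData k P C ψ e ψC ρ σ) :
    (∀ u ∈ MCsub k P C ψ e, ∀ v ∈ MCsub k P C ψ e, ∀ w ∈ MCsub k P C ψ e,
        prodX k P C ψ ψC ρ σ (prodX k P C ψ ψC ρ σ (u ⊗ₜ v) ⊗ₜ w) =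
          prodX k P C ψ ψC ρ σ (u ⊗ₜ prodX k P C ψ ψC ρ σ (v ⊗ₜ w))) ↔
      Cocycle k P C ψ ψC ρ σ ∧ Twisted k P C ψ e ψC ρ σ := by
  obtain ⟨⟨hMul, hOne, -, -⟩, -, -, -, -⟩ := hdata
  obtain ⟨⟨hI1, hI2⟩, hII, hIII, hσ, hIV1, hIV2⟩ := hcross
  have h1M : (1 : P) ∈ Msub k P C ψ e := one_mem_Msub k P C ψ e hOne
  constructor
  · intro hA
    constructor
    · apply TensorProduct.ext'
      intro a t
      induction t with
      | zero => simp [tmul_zero]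
      | tmul b c =>
        have e1 : prodX k P C ψ ψC ρ σ (((1 : P) ⊗ₜ a) ⊗ₜ ((1 : P) ⊗ₜ b)) =
            shat k P C ψC σ (a ⊗ₜ b) := by
          rw [prodX_tmul, Phi_one k P C ψ ψC ρ σ hOne hI2, lmulX_one]
        have e2 : prodX k P C ψ ψC ρ σ (((1 : P) ⊗ₜ b) ⊗ₜ ((1 : P) ⊗ₜ c)) =
            shat k P C ψC σ (b ⊗ₜ c) := by
          rw [prodX_tmul, Phi_one k P C ψ ψC ρ σ hOne hI2, lmulX_one]
        have hA' := hA ((1 : P) ⊗ₜ a) (tmul_mem_MCsub k P C ψ e h1M a)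
          ((1 : P) ⊗ₜ b) (tmul_mem_MCsub k P C ψ e h1M b)
          ((1 : P) ⊗ₜ c) (tmul_mem_MCsub k P C ψ e h1M c)
        rw [e1, e2, prodX_snd, step1_one k P C ψ ρ hOne hI2, prodX_tmul,
          lmulX_one] at hA'
        rw [CocLHS_apply, CocRHS_apply]
        exact hA'.symm
      | add s t hs ht => simp only [tmul_add, map_add, hs, ht]
    · intro a b x hx
      have e1 : prodX k P C ψ ψC ρ σ (((1 : P) ⊗ₜ a) ⊗ₜ ((1 : P) ⊗ₜ b)) =
          shat k P C ψC σ (a ⊗ₜ b) := by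
        rw [prodX_tmul, Phi_one k P C ψ ψC ρ σ hOne hI2, lmulX_one]
      have e2 : prodX k P C ψ ψC ρ σ (((1 : P) ⊗ₜ b) ⊗ₜ (x ⊗ₜ e)) =
          rhat k P C ψ ρ (b ⊗ₜ x) := by
        rw [prodX_tmul, Phi_e k P C ψ e ψC ρ σ hIV2, lmulX_one]
      have hA' := hA ((1 : P) ⊗ₜ a) (tmul_mem_MCsub k P C ψ e h1M a)
        ((1 : P) ⊗ₜ b) (tmul_mem_MCsub k P C ψ e h1M b)
        (x ⊗ₜ e) (tmul_mem_MCsub k P C ψ e hx e)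
      rw [e1, e2, prodX_snd, step2_e k P C e ψC σ hIV2, prodX_tmul,
        lmulX_one] at hA'
      rw [TwLHS_apply, TwRHS_apply]
      exact hA'.symm
  · rintro ⟨hC, hT⟩
    intro u hu v hv w hw
    refine MCsub_induction k P C ψ e
      (motive := fun u => prodX k P C ψ ψC ρ σ (prodX k P C ψ ψC ρ σ (u ⊗ₜ v) ⊗ₜ w) =
        prodX k P C ψ ψC ρ σ (u ⊗ₜ prodX k P C ψ ψC ρ σ (v ⊗ₜ w))) ?_ ?_ ?_ u hu
    · show prodX k P C ψ ψC ρ σ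
          (prodX k P C ψ ψC ρ σ ((0 : P ⊗[k] C) ⊗ₜ v) ⊗ₜ w) = _
      simp [zero_tmul]
    · intro s t hs ht
      show prodX k P C ψ ψC ρ σ (prodX k P C ψ ψC ρ σ ((s + t) ⊗ₜ v) ⊗ₜ w) = _
      simp only [add_tmul, map_add, hs, ht]
    · intro x hx a
      show prodX k P C ψ ψC ρ σ (prodX k P C ψ ψC ρ σ ((x ⊗ₜ a) ⊗ₜ v) ⊗ₜ w) =
        prodX k P C ψ ψC ρ σ ((x ⊗ₜ a) ⊗ₜ prodX k P C ψ ψC ρ σ (v ⊗ₜ w))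
      rw [prodX_tmul k P C ψ ψC ρ σ x a v, prodX_lmul,
        prodX_tmul k P C ψ ψC ρ σ x a (prodX k P C ψ ψC ρ σ (v ⊗ₜ w))]
      exact congrArg (lmulX k P C x)
        (E2 k P C ψ e ψC ρ σ hMul hσ hII hIII hC hT a hv hw)


end Entwine
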